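/- Every EAM mechanism is maximal and Pareto efficient: its outcome assigns the maximum possible number of students among individually rational matchings, and is not Pareto dominated by any individually rational matching. -/

import Mathlib

open Finset
open scoped Classical

/-- A matching assigns each student a school or `none` (unassigned). -/
abbrev Matching (I S : Type*) := I → Option S

/-- An individual strict preference over `S ∪ {∅}`: an injective utility
function on `Option S` (higher value = more preferred, `none` = being
unassigned). -/
abbrev IndPref (S : Type*) := {f : Option S → ℕ // Function.Injective f}

/-- A preference profile: one strict preference per student. -/
abbrev Prof (I S : Type*) := I → IndPref S

/-- Strict school priorities: for each school, an injective rank over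
students (higher value = higher priority). -/
abbrev Prio (I S : Type*) := {p : S → I → ℕ // ∀ s, Function.Injective (p s)}

/-- A mechanism maps reported preference profiles to matchings. -/
abbrev Mechanism (I S : Type*) := Prof I S → Matching I S

variable {I S : Type*} [Fintype I] [DecidableEq I] [Fintype S] [DecidableEq S]

/-- Capacity feasibility. -/
def Feasible (q : S → ℕ) (μ : Matching I S) : Prop :=
  ∀ s : S, (univ.filter fun i => μ i = some s).card ≤ q s

/-- Individual rationality with respect to profile `P`. -/
def IndivRational (P : Prof I S) (μ : Matching I S) : Prop :=
  ∀ i, (P i).1 none ≤ (P i).1 (μ i)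

/-- Number of assigned students. -/
def msize (μ : Matching I S) : ℕ := (univ.filter fun i => μ i ≠ none).card

/-- Maximality: no feasible individually rational matching assigns strictly
more students. -/
def MaximalMatching (P : Prof I S) (q : S → ℕ) (μ : Matching I S) : Prop :=
  ∀ μ' : Matching I S, Feasible q μ' → IndivRational P μ' → msize μ' ≤ msize μ

/-- `μ'` Pareto dominates `μ`. -/
def Dominates (P : Prof I S) (μ' μ : Matching I S) : Prop :=
  (∀ i, (P i).1 (μ i) ≤ (P i).1 (μ' i)) ∧ ∃ j, (P j).1 (μ j) < (P j).1 (μ' j)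

/-- Pareto efficiency among feasible individually rational matchings. -/
def Efficient (P : Prof I S) (q : S → ℕ) (μ : Matching I S) : Prop :=
  ¬ ∃ μ', Feasible q μ' ∧ IndivRational P μ' ∧ Dominates P μ' μ

/-- Non-wastefulness. -/
def NonWasteful (P : Prof I S) (q : S → ℕ) (μ : Matching I S) : Prop :=
  ∀ i s, (P i).1 (μ i) < (P i).1 (some s) →
    (univ.filter fun j => μ j = some s).card = q s

/-- Fairness (no justified envy). -/
def Fair (P : Prof I S) (pr : Prio I S) (μ : Matching I S) : Prop :=
  ¬ ∃ i s j, (P i).1 (μ i) < (P i).1 (some s) ∧ μ j = some s ∧ pr.1 s j < pr.1 s i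

/-- Stability: individually rational, non-wasteful and fair. -/
def Stable (P : Prof I S) (pr : Prio I S) (q : S → ℕ) (μ : Matching I S) : Prop :=
  Feasible q μ ∧ IndivRational P μ ∧ NonWasteful P q μ ∧ Fair P pr μ

/-- Fairness for unassigned students. -/
def FairForUnassigned (P : Prof I S) (pr : Prio I S) (μ : Matching I S) : Prop :=
  ¬ ∃ i s j, μ i = none ∧ (P i).1 none < (P i).1 (some s) ∧ μ j = some s ∧
    pr.1 s j < pr.1 s i

/-- `(a, t)` is an improving chain for `μ`: each student `a k` strictly
prefers `t k` to their assignment, each school `t k` (for `k < n`) is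
currently occupied by the next student `a (k+1)`, and the last school has
excess capacity. -/
def IsImpChain (P : Prof I S) (q : S → ℕ) (μ : Matching I S)
    (n : ℕ) (a : Fin (n + 1) → I) (t : Fin (n + 1) → S) : Prop :=
  Function.Injective a ∧
  (∀ k, (P (a k)).1 (μ (a k)) < (P (a k)).1 (some (t k))) ∧
  (∀ k : Fin n, μ (a k.succ) = some (t k.castSucc)) ∧
  (univ.filter fun j => μ j = some (t (Fin.last n))).card < q (t (Fin.last n))

/-- `(a, t)` is an improving cycle for `μ`: each student `a k` is assigned
to `t k` and strictly prefers the school `t (k+1)` vacated by the next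
student in the cycle. -/
def IsImpCycle (P : Prof I S) (μ : Matching I S)
    (n : ℕ) (a : Fin (n + 1) → I) (t : Fin (n + 1) → S) : Prop :=
  Function.Injective a ∧
  (∀ k, μ (a k) = some (t k)) ∧
  (∀ k, (P (a k)).1 (some (t k)) < (P (a k)).1 (some (t (k + 1))))

def HasImpChain (P : Prof I S) (q : S → ℕ) (μ : Matching I S) : Prop :=
  ∃ n a t, IsImpChain P q μ n a t

def HasImpCycle (P : Prof I S) (μ : Matching I S) : Prop :=
  ∃ n a t, IsImpCycle P μ n a t

/-- Implementing one improving chain or cycle: every student involved moves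
to the school they prefer in the chain/cycle, all others keep their
assignment. -/
def ImplementStep (P : Prof I S) (q : S → ℕ) (μ μ' : Matching I S) : Prop :=
  (∃ n a t, IsImpChain P q μ n a t ∧ (∀ k, μ' (a k) = some (t k)) ∧
    ∀ j, (∀ k, j ≠ a k) → μ' j = μ j) ∨
  (∃ n a t, IsImpCycle P μ n a t ∧ (∀ k, μ' (a k) = some (t (k + 1))) ∧
    ∀ j, (∀ k, j ≠ a k) → μ' j = μ j)

/-- One refinement step of the first stage of EAM: keep only the matchings
assigning student `i`, whenever such matchings exist. -/
noncomputable def xiStep (A : Set (Matching I S)) (i : I) : Set (Matching I S) :=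
  if ∃ μ ∈ A, μ i ≠ none then {μ ∈ A | μ i ≠ none} else A

/-- The set `ξ^n` of the first stage of EAM, for the enumeration `L` of the
students, starting from all feasible individually rational matchings. -/
noncomputable def xiList (P : Prof I S) (q : S → ℕ) (L : List I) :
    Set (Matching I S) :=
  L.foldl xiStep {μ | Feasible q μ ∧ IndivRational P μ}

/-- `μ` is a possible outcome of an EAM procedure with student enumeration
`L`: it is reachable from some matching selected in the first stage by
implementing improving chains/cycles, and admits no further improving chain
or cycle. -/
def IsEAMOutcome (P : Prof I S) (q : S → ℕ) (L : List I) (μ : Matching I S) :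
    Prop :=
  ∃ μ₀ ∈ xiList P q L, Relation.ReflTransGen (ImplementStep P q) μ₀ μ ∧
    ¬ HasImpChain P q μ ∧ ¬ HasImpCycle P μ

/-- EAM mechanisms with enumeration `L`. -/
def IsEAMMech (q : S → ℕ) (L : List I) (ψ : Mechanism I S) : Prop :=
  ∀ P, IsEAMOutcome P q L (ψ P)

/-- One sub-step of Step 2 of FAM: a pair `(i, s)` violating fairness for
unassigned students is resolved by placing `i` at `s` and unassigning the
lowest-priority student currently matched to `s`. -/
def FairStep (P : Prof I S) (pr : Prio I S) (μ μ' : Matching I S) : Prop :=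
  ∃ i s j, μ i = none ∧ (P i).1 none < (P i).1 (some s) ∧ μ j = some s ∧
    pr.1 s j < pr.1 s i ∧ (∀ j', μ j' = some s → pr.1 s j ≤ pr.1 s j') ∧
    μ' = Function.update (Function.update μ j none) i (some s)

/-- FAM mechanisms: an EAM first stage followed by iterated resolution of
violations of fairness for unassigned students. -/
def IsFAMMech (q : S → ℕ) (pr : Prio I S) (L : List I) (ψ : Mechanism I S) :
    Prop :=
  ∀ P, ∃ μ₁, IsEAMOutcome P q L μ₁ ∧
    Relation.ReflTransGen (FairStep P pr) μ₁ (ψ P) ∧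
    FairForUnassigned P pr (ψ P)

/-- Individually rational mechanism (with respect to reports). -/
def IRMech (q : S → ℕ) (ψ : Mechanism I S) : Prop :=
  ∀ P, Feasible q (ψ P) ∧ IndivRational P (ψ P)

/-- MaximalMatching mechanism. -/
def MaximalMech (q : S → ℕ) (ψ : Mechanism I S) : Prop :=
  IRMech q ψ ∧ ∀ P, MaximalMatching P q (ψ P)

/-- Nash equilibrium of the preference-reporting game induced by `ψ`, with
true preferences `u`. -/
def NashEq (u : Prof I S) (ψ : Mechanism I S) (P' : Prof I S) : Prop :=
  ∀ (i : I) (Pi'' : IndPref S),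
    (u i).1 (ψ (Function.update P' i Pi'') i) ≤ (u i).1 (ψ P' i)

/-- Strategy-proofness. -/
def StrategyProof (ψ : Mechanism I S) : Prop :=
  ∀ (P : Prof I S) (i : I) (Pi' : IndPref S),
    (P i).1 (ψ (Function.update P i Pi') i) ≤ (P i).1 (ψ P i)

/-- A maximizer of `f` on the nonempty finite set `A`. -/
noncomputable def bestOf (f : Option S → ℕ) (A : Finset (Option S))
    (h : A.Nonempty) : Option S :=
  (Finset.exists_max_image A f h).choose

/-- Serial dictatorship: students pick, in the order given, their most
preferred option among `none` and the schools with remaining capacity. -/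
noncomputable def sdRun (P : Prof I S) :
    List I → (S → ℕ) → Matching I S → Matching I S
  | [], _, μ => μ
  | i :: rest, rem, μ =>
    let c := bestOf (P i).1 (insert none ((univ.filter fun s => 0 < rem s).image some))
      (insert_nonempty _ _)
    sdRun P rest (fun s => if c = some s then rem s - 1 else rem s)
      (Function.update μ i c)

/-- The serial dictatorship outcome with ordering `L` and capacities `q`. -/
noncomputable def SD (P : Prof I S) (q : S → ℕ) (L : List I) : Matching I S :=
  sdRun P L q fun _ => none


variable {I S : Type*} [Fintype I] [DecidableEq I] [Fintype S] [DecidableEq S]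

set_option linter.unusedSectionVars false

section Aux
variable (P : Prof I S) (q : S → ℕ)

def EAcc (i : I) (s : S) : Prop := (P i).1 none < (P i).1 (some s)

noncomputable def eallowed (i : I) : Finset (Σ s : S, Fin (q s)) :=
  univ.filter (fun p => EAcc P i p.1)

def EIndep (X : Finset I) : Prop :=
  ∃ μ : Matching I S, Feasible q μ ∧ IndivRational P μ ∧ ∀ i ∈ X, μ i ≠ none

def EHall (X : Finset I) : Prop :=
  ∀ Y ⊆ X, Y.card ≤ (Y.biUnion (eallowed P q)).card

variable {P q}

lemma acc_of_assigned {μ : Matching I S} (hir : IndivRational P μ) {i : I} {s : S}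
    (h : μ i = some s) : EAcc P i s := by
  have h2 := hir i
  rw [h] at h2
  rcases lt_or_eq_of_le h2 with h' | h'
  · exact h'
  · exact absurd ((P i).2 h') (by simp)

noncomputable def erep (μ : Matching I S) (hf : Feasible q μ) (i : I) :
    Option (Σ s : S, Fin (q s)) :=
  if h : ∃ s, μ i = some s then
    some ⟨h.choose, Fin.castLE (hf h.choose)
      ((univ.filter fun j => μ j = some h.choose).equivFin ⟨i, mem_filter.mpr ⟨mem_univ i, h.choose_spec⟩⟩)⟩
  else none

lemma erep_spec {μ : Matching I S} (hf : Feasible q μ) {i : I} {s : S} {c : Fin (q s)}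
    (h : erep μ hf i = some ⟨s, c⟩) :
    ∃ (hm : μ i = some s),
      c = Fin.castLE (hf s) ((univ.filter fun j => μ j = some s).equivFin
        ⟨i, mem_filter.mpr ⟨mem_univ i, hm⟩⟩) := by
  by_cases hex : ∃ s', μ i = some s'
  · rw [erep, dif_pos hex] at h
    injection h with h'
    obtain ⟨h1, h2⟩ := Sigma.mk.inj_iff.mp h'
    subst h1
    exact ⟨hex.choose_spec, (eq_of_heq h2).symm⟩
  · rw [erep, dif_neg hex] at h
    exact absurd h (by simp)

lemma erep_eq_some {μ : Matching I S} (hf : Feasible q μ) {i : I} {s : S}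
    (h : μ i = some s) : ∃ c, erep μ hf i = some ⟨s, c⟩ := by
  have hex : ∃ s', μ i = some s' := ⟨s, h⟩
  obtain rfl : hex.choose = s := Option.some_injective _ (hex.choose_spec.symm.trans h)
  exact ⟨_, (dif_pos hex : erep μ hf i = _)⟩

lemma erep_inj {μ : Matching I S} (hf : Feasible q μ) {i j : I}
    {p : Σ s : S, Fin (q s)}
    (hi : erep μ hf i = some p) (hj : erep μ hf j = some p) : i = j := by
  obtain ⟨s, c⟩ := p
  obtain ⟨hmi, hci⟩ := erep_spec hf hi
  obtain ⟨hmj, hcj⟩ := erep_spec hf hj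
  have := Fin.castLE_injective (hf s) (hci.symm.trans hcj)
  have := (univ.filter fun j => μ j = some s).equivFin.injective this
  exact congrArg Subtype.val this

lemma eindep_hall {X : Finset I} (h : EIndep P q X) : EHall P q X := by
  obtain ⟨μ, hf, hir, hass⟩ := h
  intro Y hY
  have key : ∀ i : {x // x ∈ Y}, ∃ p ∈ Y.biUnion (eallowed P q),
      erep μ hf i.1 = some p := by
    rintro ⟨i, hi⟩
    obtain ⟨s, hs⟩ := Option.ne_none_iff_exists'.mp (hass i (hY hi))
    obtain ⟨c, hc⟩ := erep_eq_some hf hs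
    exact ⟨⟨s, c⟩, mem_biUnion.mpr ⟨i, hi, by simp [eallowed, acc_of_assigned hir hs]⟩, hc⟩
  choose f hfmem hfrep using key
  have hcard : Y.attach.card ≤ (Y.biUnion (eallowed P q)).card := by
    apply card_le_card_of_injOn f (fun a _ => hfmem a)
    intro a _ b _ hab
    exact Subtype.ext (erep_inj hf (hfrep a) (hab ▸ hfrep b))
  simpa using hcard

lemma ehall_indep {X : Finset I} (h : EHall P q X) : EIndep P q X := by
  have hall : ∀ Z : Finset {x // x ∈ X},
      Z.card ≤ (Z.biUnion fun i => eallowed P q i.1).card := by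
    intro Z
    have h1 : (Z.image Subtype.val).card = Z.card := card_image_of_injective _ Subtype.val_injective
    have h2 : (Z.image Subtype.val).biUnion (eallowed P q)
        = Z.biUnion fun i => eallowed P q i.1 := by
      ext p; simp
    have := h (Z.image Subtype.val) (by intro x hx; simp at hx; obtain ⟨h', _⟩ := hx; exact h')
    rw [h1, h2] at this
    exact this
  obtain ⟨f, hfinj, hfmem⟩ :=
    (Finset.all_card_le_biUnion_card_iff_exists_injective _).mp hall
  refine ⟨fun i => if h : i ∈ X then some (f ⟨i, h⟩).1 else none, ?_, ?_, ?_⟩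
  · intro s
    set A := univ.filter fun i =>
      (if h : i ∈ X then some (f ⟨i, h⟩).1 else none) = some s with hA
    have hmem : ∀ i ∈ A, ∃ h : i ∈ X, (f ⟨i, h⟩).1 = s := by
      intro i hi
      rw [hA, mem_filter] at hi
      by_cases h : i ∈ X
      · refine ⟨h, ?_⟩
        have := hi.2
        rw [dif_pos h] at this
        exact Option.some_injective _ this
      · have := hi.2
        rw [dif_neg h] at this
        exact absurd this (by simp)
    have hcardB : (univ.filter fun p : Σ s' : S, Fin (q s') => p.1 = s).card = q s := by
      have himg : (univ.filter fun p : Σ s' : S, Fin (q s') => p.1 = s)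
          = univ.image (Sigma.mk s) := by
        ext ⟨s', c⟩
        simp only [mem_filter, mem_univ, true_and, mem_image]
        constructor
        · rintro rfl; exact ⟨c, rfl⟩
        · rintro ⟨c', hc⟩; cases hc; rfl
      rw [himg, card_image_of_injective _ sigma_mk_injective, card_univ, Fintype.card_fin]
    have hinj2 : ∃ g : {x // x ∈ A} → {p // p ∈ univ.filter fun p : Σ s' : S, Fin (q s') => p.1 = s},
        Function.Injective g := by
      refine ⟨fun i => ⟨f ⟨i.1, (hmem i.1 i.2).choose⟩, ?_⟩, ?_⟩
      · rw [mem_filter]; exact ⟨mem_univ _, (hmem i.1 i.2).choose_spec⟩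
      · intro a b hab
        have h1 := hfinj (Subtype.ext_iff.mp hab)
        have h2 : a.1 = b.1 := Subtype.mk_eq_mk.mp h1
        exact Subtype.ext h2
    obtain ⟨g, hg⟩ := hinj2
    have := Fintype.card_le_of_injective g hg
    rw [Fintype.card_coe, Fintype.card_coe] at this
    rw [hcardB] at this
    exact this
  · intro i
    by_cases h : i ∈ X
    · have hm := hfmem ⟨i, h⟩
      rw [eallowed, mem_filter] at hm
      simp only [dif_pos h]
      exact le_of_lt hm.2
    · simp only [dif_neg h]
      exact le_refl _
  · intro i hi
    simp only [dif_pos hi]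
    simp

end Aux

lemma ehall_exchange {P : Prof I S} {q : S → ℕ} {F B : Finset I}
    (hF : EHall P q F) (hB : EHall P q B) (hlt : F.card < B.card) :
    ∃ i ∈ B \ F, EHall P q (insert i F) := by
  classical
  by_contra hcon
  push_neg at hcon
  set NN : Finset I → Finset (Σ s : S, Fin (q s)) := fun Y => Y.biUnion (eallowed P q)
    with hNN
  -- tight witnesses
  have hwit : ∀ i ∈ B \ F, ∃ Y, Y ⊆ F ∧ (NN Y).card ≤ Y.card ∧ eallowed P q i ⊆ NN Y := by
    intro i hi
    have h1 := hcon i hi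
    rw [EHall] at h1
    push_neg at h1
    obtain ⟨Y, hYsub, hYlt⟩ := h1
    have hiY : i ∈ Y := by
      by_contra hiY
      have : Y ⊆ F := fun x hx => by
        rcases mem_insert.mp (hYsub hx) with rfl | h
        · exact absurd hx hiY
        · exact h
      exact absurd (hF Y this) (not_le.mpr hYlt)
    set Y' := Y.erase i with hY'
    have hY'F : Y' ⊆ F := by
      intro x hx
      rw [hY', mem_erase] at hx
      rcases mem_insert.mp (hYsub hx.2) with rfl | h
      · exact absurd rfl hx.1
      · exact h
    have hYcard : Y.card = Y'.card + 1 := by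
      rw [hY', card_erase_of_mem hiY]
      have : 0 < Y.card := card_pos.mpr ⟨i, hiY⟩
      omega
    have hYins : Y = insert i Y' := by rw [hY', insert_erase hiY]
    have hNNY : NN Y = eallowed P q i ∪ NN Y' := by rw [hYins, hNN]; exact biUnion_insert
    have hYlt' : (NN Y).card < Y.card := hYlt
    have h2 : (eallowed P q i ∪ NN Y').card ≤ Y'.card := by
      rw [← hNNY]; omega
    have h3 : Y'.card ≤ (NN Y').card := hF Y' hY'F
    have h4 : NN Y' = eallowed P q i ∪ NN Y' :=
      eq_of_subset_of_card_le subset_union_right (le_trans h2 h3)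
    refine ⟨Y', hY'F, le_trans (card_le_card subset_union_right) h2, ?_⟩
    rw [h4]
    exact subset_union_left
  choose! Ysel hYsub hYtight hYcov using hwit
  -- tight union lemma
  have tight_union : ∀ Y Z : Finset I, Y ⊆ F → Z ⊆ F → (NN Y).card ≤ Y.card →
      (NN Z).card ≤ Z.card → (NN (Y ∪ Z)).card ≤ (Y ∪ Z).card := by
    intro Y Z hYF hZF hY hZ
    have e1 : (NN Y ∪ NN Z).card + (NN Y ∩ NN Z).card = (NN Y).card + (NN Z).card :=
      card_union_add_card_inter _ _
    have e2 : (Y ∪ Z).card + (Y ∩ Z).card = Y.card + Z.card :=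
      card_union_add_card_inter _ _
    have hsub : NN (Y ∩ Z) ⊆ NN Y ∩ NN Z := by
      intro p hp
      rw [hNN] at hp
      obtain ⟨x, hx, hpx⟩ := mem_biUnion.mp hp
      rw [mem_inter] at hx
      exact mem_inter.mpr ⟨mem_biUnion.mpr ⟨x, hx.1, hpx⟩, mem_biUnion.mpr ⟨x, hx.2, hpx⟩⟩
    have h5 : (Y ∩ Z).card ≤ (NN (Y ∩ Z)).card :=
      hF _ (fun x hx => hYF (mem_inter.mp hx).1)
    have h6 : (NN (Y ∩ Z)).card ≤ (NN Y ∩ NN Z).card := card_le_card hsub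
    have h7 : NN (Y ∪ Z) = NN Y ∪ NN Z := by
      ext p
      constructor
      · intro hp
        obtain ⟨x, hx, hpx⟩ := mem_biUnion.mp hp
        rcases mem_union.mp hx with h | h
        · exact mem_union.mpr (Or.inl (mem_biUnion.mpr ⟨x, h, hpx⟩))
        · exact mem_union.mpr (Or.inr (mem_biUnion.mpr ⟨x, h, hpx⟩))
      · intro hp
        rcases mem_union.mp hp with h | h
        · obtain ⟨x, hx, hpx⟩ := mem_biUnion.mp h
          exact mem_biUnion.mpr ⟨x, mem_union.mpr (Or.inl hx), hpx⟩
        · obtain ⟨x, hx, hpx⟩ := mem_biUnion.mp h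
          exact mem_biUnion.mpr ⟨x, mem_union.mpr (Or.inr hx), hpx⟩
    rw [h7]
    omega
  -- union of all tight sets
  have hbig : ∀ D : Finset I, D ⊆ B \ F → ∃ W, W ⊆ F ∧ (NN W).card ≤ W.card ∧
      ∀ i ∈ D, eallowed P q i ⊆ NN W := by
    intro D
    induction D using Finset.induction_on with
    | empty =>
      intro _
      refine ⟨∅, empty_subset _, ?_, fun i hi => absurd hi (notMem_empty _)⟩
      rw [hNN]; simp
    | @insert a D' haD ih =>
      intro hsub
      obtain ⟨W, hWF, hWt, hWc⟩ := ih (fun x hx => hsub (mem_insert_of_mem hx))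
      have haB : a ∈ B \ F := hsub (mem_insert_self _ _)
      refine ⟨W ∪ Ysel a, union_subset hWF (hYsub a haB),
        tight_union _ _ hWF (hYsub a haB) hWt (hYtight a haB), ?_⟩
      intro i hi
      have hmono : ∀ U V : Finset I, U ⊆ V → NN U ⊆ NN V := fun U V h =>
        biUnion_subset_biUnion_of_subset_left _ h
      rcases mem_insert.mp hi with rfl | h
      · exact subset_trans (hYcov i haB) (hmono _ _ subset_union_right)
      · exact subset_trans (hWc i h) (hmono _ _ subset_union_left)
  obtain ⟨W, hWF, hWt, hWc⟩ := hbig (B \ F) (Subset.refl _)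
  -- final counting
  set Z := (B \ F) ∪ (W ∩ B) with hZ
  have hZB : Z ⊆ B := union_subset (sdiff_subset) (fun x hx => (mem_inter.mp hx).2)
  have hNNZ : NN Z ⊆ NN W := by
    intro p hp
    rw [hNN] at hp
    obtain ⟨x, hx, hpx⟩ := mem_biUnion.mp hp
    rcases mem_union.mp hx with h | h
    · exact hWc x h hpx
    · exact mem_biUnion.mpr ⟨x, (mem_inter.mp h).1, hpx⟩
  have h1 : Z.card ≤ (NN Z).card := hB Z hZB
  have h2 : (NN Z).card ≤ (NN W).card := card_le_card hNNZ
  have hdisj : Disjoint (B \ F) (W ∩ B) := by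
    rw [disjoint_left]
    intro x hx hx2
    exact (mem_sdiff.mp hx).2 (hWF (mem_inter.mp hx2).1)
  have h3 : Z.card = (B \ F).card + (W ∩ B).card := card_union_of_disjoint hdisj
  have h4 : (W ∩ B).card + (W \ B).card = W.card := card_inter_add_card_sdiff _ _
  have h5 : (W \ B).card ≤ (F \ B).card := card_le_card (fun x hx =>
    mem_sdiff.mpr ⟨hWF (mem_sdiff.mp hx).1, (mem_sdiff.mp hx).2⟩)
  have h6 : (B ∩ F).card + (B \ F).card = B.card := card_inter_add_card_sdiff _ _
  have h7 : (F ∩ B).card + (F \ B).card = F.card := card_inter_add_card_sdiff _ _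
  have h8 : (F ∩ B).card = (B ∩ F).card := by rw [inter_comm]
  omega





lemma xi_invariant (P : Prof I S) (q : S → ℕ) (l : List I) :
    ∀ F : Finset I, ∃ F' : Finset I, F ⊆ F' ∧
      (List.foldl xiStep {μ | Feasible q μ ∧ IndivRational P μ ∧ ∀ i ∈ F, μ i ≠ none} l
        = {μ | Feasible q μ ∧ IndivRational P μ ∧ ∀ i ∈ F', μ i ≠ none}) ∧
      ∀ i ∈ l, EIndep P q (insert i F') → i ∈ F' := by
  induction l with
  | nil =>
    intro F
    exact ⟨F, Subset.refl _, rfl, fun i hi => absurd hi List.not_mem_nil⟩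
  | cons a l ih =>
    intro F
    rw [List.foldl_cons]
    set A := {μ : Matching I S | Feasible q μ ∧ IndivRational P μ ∧ ∀ i ∈ F, μ i ≠ none}
      with hA
    by_cases hc : ∃ μ ∈ A, μ a ≠ none
    · have hstep : xiStep A a
          = {μ : Matching I S | Feasible q μ ∧ IndivRational P μ ∧
              ∀ i ∈ insert a F, μ i ≠ none} := by
        rw [xiStep, if_pos hc]
        ext μ
        constructor
        · rintro ⟨⟨h1, h2, h3⟩, h4⟩
          refine ⟨h1, h2, fun i hi => ?_⟩
          rcases mem_insert.mp hi with rfl | h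
          · exact h4
          · exact h3 i h
        · rintro ⟨h1, h2, h3⟩
          exact ⟨⟨h1, h2, fun i hi => h3 i (mem_insert_of_mem hi)⟩,
            h3 a (mem_insert_self _ _)⟩
      rw [hstep]
      obtain ⟨F', hsub, heq, hprop⟩ := ih (insert a F)
      refine ⟨F', subset_trans (subset_insert _ _) hsub, heq, ?_⟩
      intro i hi
      rcases List.mem_cons.mp hi with rfl | h
      · intro _; exact hsub (mem_insert_self _ _)
      · exact hprop i h
    · have hstep : xiStep A a = A := by rw [xiStep, if_neg hc]
      rw [hstep]
      obtain ⟨F', hsub, heq, hprop⟩ := ih F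
      refine ⟨F', hsub, heq, ?_⟩
      intro i hi
      rcases List.mem_cons.mp hi with rfl | h
      · intro hind
        exfalso
        obtain ⟨μ, h1, h2, h3⟩ := hind
        exact hc ⟨μ, ⟨h1, h2, fun j hj => h3 j (mem_insert_of_mem (hsub hj))⟩,
          h3 i (mem_insert_self _ _)⟩
      · exact hprop i h

lemma xi_maximal (P : Prof I S) (q : S → ℕ) (L : List I) (hcomp : ∀ i : I, i ∈ L)
    {μ₀ : Matching I S} (h : μ₀ ∈ xiList P q L) :
    Feasible q μ₀ ∧ IndivRational P μ₀ ∧ MaximalMatching P q μ₀ := by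
  obtain ⟨F', _, heq, hprop⟩ := xi_invariant P q L (∅ : Finset I)
  have hstart : {μ : Matching I S | Feasible q μ ∧ IndivRational P μ}
      = {μ : Matching I S | Feasible q μ ∧ IndivRational P μ ∧
          ∀ i ∈ (∅ : Finset I), μ i ≠ none} := by
    ext μ; simp
  rw [xiList, hstart, heq] at h
  obtain ⟨hf, hir, hass⟩ := h
  refine ⟨hf, hir, ?_⟩
  intro μ' hf' hir'
  set B := univ.filter fun i => μ' i ≠ none with hB
  have hindB : EIndep P q B := ⟨μ', hf', hir', fun i hi => (mem_filter.mp hi).2⟩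
  have hindF : EIndep P q F' := ⟨μ₀, hf, hir, hass⟩
  have hle : B.card ≤ F'.card := by
    by_contra hlt
    push_neg at hlt
    obtain ⟨i, hi, hhall⟩ := ehall_exchange (eindep_hall hindF) (eindep_hall hindB) hlt
    exact (mem_sdiff.mp hi).2 (hprop i (hcomp i) (ehall_indep hhall))
  have hF'sub : F' ⊆ univ.filter fun i => μ₀ i ≠ none := by
    intro i hi
    exact mem_filter.mpr ⟨mem_univ i, hass i hi⟩
  calc msize μ' = B.card := rfl
    _ ≤ F'.card := hle
    _ ≤ msize μ₀ := card_le_card hF'sub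






lemma step_preserves {P : Prof I S} {q : S → ℕ} {μ μ' : Matching I S}
    (h : ImplementStep P q μ μ') (hf : Feasible q μ) (hir : IndivRational P μ) :
    Feasible q μ' ∧ IndivRational P μ' ∧ msize μ ≤ msize μ' := by
  classical
  rcases h with ⟨n, a, t, ⟨hinj, hpref, hmid, hlast⟩, hnew, hold⟩ |
    ⟨n, a, t, ⟨hinj, hcyc, hpref⟩, hnew, hold⟩
  · -- chain
    refine ⟨?_, ?_, ?_⟩
    · intro s
      set N := univ.filter fun j => μ' j = some s with hN
      set O := univ.filter fun j => μ j = some s with hO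
      have hsplitN := card_filter_add_card_filter_not
        (s := N) (p := fun j => ∃ k, j = a k)
      have hsplitO := card_filter_add_card_filter_not
        (s := O) (p := fun j => ∃ k, j = a k)
      beta_reduce at hsplitN hsplitO
      have ha : N.filter (fun j => ¬∃ k, j = a k) = O.filter (fun j => ¬∃ k, j = a k) := by
        ext j
        simp only [hN, hO, mem_filter, mem_univ, true_and]
        constructor
        · rintro ⟨h1, h2⟩
          exact ⟨(hold j (fun k hk => h2 ⟨k, hk⟩)).symm.trans h1, h2⟩
        · rintro ⟨h1, h2⟩
          exact ⟨(hold j (fun k hk => h2 ⟨k, hk⟩)).trans h1, h2⟩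
      have ha' : (N.filter (fun j => ¬∃ k, j = a k)).card
          = (O.filter (fun j => ¬∃ k, j = a k)).card := by rw [ha]
      set K₁ := univ.filter fun k : Fin (n+1) => t k = s with hK₁
      set K₂ := univ.filter fun k : Fin n => t k.castSucc = s with hK₂
      have hb : N.filter (fun j => ∃ k, j = a k) = K₁.image a := by
        ext j
        simp only [hN, hK₁, mem_filter, mem_univ, true_and, mem_image]
        constructor
        · rintro ⟨h1, k, rfl⟩
          exact ⟨k, Option.some_injective _ ((hnew k).symm.trans h1), rfl⟩
        · rintro ⟨k, hk, rfl⟩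
          exact ⟨(hnew k).trans (by rw [hk]), k, rfl⟩
      have hc : K₂.image (fun k : Fin n => a k.succ) ⊆ O.filter (fun j => ∃ k, j = a k) := by
        intro j hj
        obtain ⟨k, hk, rfl⟩ := mem_image.mp hj
        rw [hK₂, mem_filter] at hk
        rw [hO, mem_filter, mem_filter]
        exact ⟨⟨mem_univ _, (hmid k).trans (by rw [hk.2])⟩, ⟨k.succ, rfl⟩⟩
      have hcardb : (N.filter (fun j => ∃ k, j = a k)).card = K₁.card := by
        rw [hb, card_image_of_injective _ hinj]
      have hcardc : K₂.card ≤ (O.filter (fun j => ∃ k, j = a k)).card := by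
        calc K₂.card = (K₂.image (fun k : Fin n => a k.succ)).card :=
              (card_image_of_injective _
                (fun x y hxy => Fin.succ_injective n (hinj hxy))).symm
          _ ≤ _ := card_le_card hc
      by_cases hs : s = t (Fin.last n)
      · have hK₁le : K₁.card ≤ K₂.card + 1 := by
          have : K₁ ⊆ insert (Fin.last n) (K₂.image Fin.castSucc) := by
            intro k hk
            rw [hK₁, mem_filter] at hk
            by_cases hkl : k = Fin.last n
            · exact mem_insert.mpr (Or.inl hkl)
            · obtain ⟨j, rfl⟩ := Fin.exists_castSucc_eq.mpr hkl
              exact mem_insert.mpr (Or.inr (mem_image.mpr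
                ⟨j, mem_filter.mpr ⟨mem_univ _, hk.2⟩, rfl⟩))
          calc K₁.card ≤ (insert (Fin.last n) (K₂.image Fin.castSucc)).card :=
                card_le_card this
            _ ≤ (K₂.image Fin.castSucc).card + 1 := card_insert_le _ _
            _ ≤ K₂.card + 1 := by
                rw [card_image_of_injective _ (Fin.castSucc_injective n)]
        have hOlt : O.card < q s := by
          rw [hO, hs]
          exact hlast
        omega
      · have hK₁le : K₁.card ≤ K₂.card := by
          have : K₁ ⊆ K₂.image Fin.castSucc := by
            intro k hk
            rw [hK₁, mem_filter] at hk
            have hkl : k ≠ Fin.last n := by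
              intro hh
              exact hs (by rw [← hk.2, hh])
            obtain ⟨j, rfl⟩ := Fin.exists_castSucc_eq.mpr hkl
            exact mem_image.mpr ⟨j, mem_filter.mpr ⟨mem_univ _, hk.2⟩, rfl⟩
          calc K₁.card ≤ (K₂.image Fin.castSucc).card := card_le_card this
            _ ≤ K₂.card := by rw [card_image_of_injective _ (Fin.castSucc_injective n)]
        have hOle : O.card ≤ q s := hf s
        omega
    · intro j
      by_cases hj : ∃ k, j = a k
      · obtain ⟨k, rfl⟩ := hj
        rw [hnew k]
        exact le_of_lt (lt_of_le_of_lt (hir (a k)) (hpref k))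
      · rw [hold j (fun k hk => hj ⟨k, hk⟩)]
        exact hir j
    · apply card_le_card
      intro j hj
      rw [mem_filter] at hj ⊢
      refine ⟨mem_univ _, ?_⟩
      by_cases hjr : ∃ k, j = a k
      · obtain ⟨k, rfl⟩ := hjr
        rw [hnew k]; simp
      · rw [hold j (fun k hk => hjr ⟨k, hk⟩)]
        exact hj.2
  · -- cycle
    refine ⟨?_, ?_, ?_⟩
    · intro s
      set N := univ.filter fun j => μ' j = some s with hN
      set O := univ.filter fun j => μ j = some s with hO
      have hsplitN := card_filter_add_card_filter_not
        (s := N) (p := fun j => ∃ k, j = a k)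
      have hsplitO := card_filter_add_card_filter_not
        (s := O) (p := fun j => ∃ k, j = a k)
      beta_reduce at hsplitN hsplitO
      have ha : N.filter (fun j => ¬∃ k, j = a k) = O.filter (fun j => ¬∃ k, j = a k) := by
        ext j
        simp only [hN, hO, mem_filter, mem_univ, true_and]
        constructor
        · rintro ⟨h1, h2⟩
          exact ⟨(hold j (fun k hk => h2 ⟨k, hk⟩)).symm.trans h1, h2⟩
        · rintro ⟨h1, h2⟩
          exact ⟨(hold j (fun k hk => h2 ⟨k, hk⟩)).trans h1, h2⟩
      set K₁ := univ.filter fun k : Fin (n+1) => t (k + 1) = s with hK₁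
      set K₂ := univ.filter fun k : Fin (n+1) => t k = s with hK₂
      have hb : N.filter (fun j => ∃ k, j = a k) = K₁.image a := by
        ext j
        simp only [hN, hK₁, mem_filter, mem_univ, true_and, mem_image]
        constructor
        · rintro ⟨h1, k, rfl⟩
          exact ⟨k, Option.some_injective _ ((hnew k).symm.trans h1), rfl⟩
        · rintro ⟨k, hk, rfl⟩
          exact ⟨(hnew k).trans (by rw [hk]), k, rfl⟩
      have hc : O.filter (fun j => ∃ k, j = a k) = K₂.image a := by
        ext j
        simp only [hO, hK₂, mem_filter, mem_univ, true_and, mem_image]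
        constructor
        · rintro ⟨h1, k, rfl⟩
          exact ⟨k, Option.some_injective _ ((hcyc k).symm.trans h1), rfl⟩
        · rintro ⟨k, hk, rfl⟩
          exact ⟨(hcyc k).trans (by rw [hk]), k, rfl⟩
      have hKK : K₁.card = K₂.card := by
        apply card_bij (fun k _ => k + 1)
        · intro k hk
          rw [hK₂, mem_filter]
          rw [hK₁, mem_filter] at hk
          exact ⟨mem_univ _, hk.2⟩
        · intro x _ y _ hxy
          exact add_right_cancel hxy
        · intro k hk
          rw [hK₂, mem_filter] at hk
          refine ⟨k - 1, ?_, sub_add_cancel k 1⟩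
          rw [hK₁, mem_filter]
          exact ⟨mem_univ _, by rw [sub_add_cancel]; exact hk.2⟩
      have : N.card = O.card := by
        rw [← hsplitN, ← hsplitO, ha, hb, hc,
          card_image_of_injective _ hinj, card_image_of_injective _ hinj, hKK]
      rw [this]
      exact hf s
    · intro j
      by_cases hj : ∃ k, j = a k
      · obtain ⟨k, rfl⟩ := hj
        rw [hnew k]
        refine le_of_lt (lt_of_le_of_lt ?_ (hpref k))
        rw [← hcyc k]
        exact hir (a k)
      · rw [hold j (fun k hk => hj ⟨k, hk⟩)]
        exact hir j
    · apply card_le_card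
      intro j hj
      rw [mem_filter] at hj ⊢
      refine ⟨mem_univ _, ?_⟩
      by_cases hjr : ∃ k, j = a k
      · obtain ⟨k, rfl⟩ := hjr
        rw [hnew k]; simp
      · rw [hold j (fun k hk => hjr ⟨k, hk⟩)]
        exact hj.2



lemma no_chain_cycle_efficient {P : Prof I S} {q : S → ℕ} {μ : Matching I S}
    (hf : Feasible q μ) (hir : IndivRational P μ)
    (hnc : ¬HasImpChain P q μ) (hncy : ¬HasImpCycle P μ) : Efficient P q μ := by
  classical
  rintro ⟨μ', hf', hir', hdomall, j₀, hj₀⟩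
  set Bad : I → Prop := fun i => (P i).1 (μ i) < (P i).1 (μ' i) with hBad
  have hstep : ∀ i, Bad i → ∃ j, Bad j ∧ μ j = μ' i := by
    intro i hbad
    obtain ⟨s, hs⟩ : ∃ s, μ' i = some s := by
      cases hμ'i : μ' i with
      | none =>
        rw [hBad] at hbad
        rw [hμ'i] at hbad
        exact absurd (hir i) (not_le.mpr hbad)
      | some s => exact ⟨s, rfl⟩
    have hbad' : (P i).1 (μ i) < (P i).1 (some s) := by
      rw [hBad] at hbad
      rw [hs] at hbad
      exact hbad
    have hfull : q s ≤ (univ.filter fun j => μ j = some s).card := by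
      by_contra hh
      push_neg at hh
      exact hnc ⟨0, fun _ => i, fun _ => s,
        fun x y _ => Fin.ext (by omega),
        fun _ => hbad', fun k => k.elim0, hh⟩
    have hμi : μ i ≠ some s := by
      intro hh
      rw [hh] at hbad'
      exact lt_irrefl _ hbad'
    have hnsub : ¬ (univ.filter fun j => μ j = some s)
        ⊆ (univ.filter fun j => μ' j = some s) := by
      intro hsub
      have hins : insert i (univ.filter fun j => μ j = some s)
          ⊆ (univ.filter fun j => μ' j = some s) :=
        insert_subset (mem_filter.mpr ⟨mem_univ _, hs⟩) hsub
      have hnotmem : i ∉ (univ.filter fun j => μ j = some s) := by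
        rw [mem_filter]
        exact fun hh => hμi hh.2
      have := card_le_card hins
      rw [card_insert_of_notMem hnotmem] at this
      have := le_trans this (hf' s)
      omega
    obtain ⟨j, hj1, hj2⟩ := not_subset.mp hnsub
    rw [mem_filter] at hj1 hj2
    have hμj : μ j = some s := hj1.2
    have hμ'j : μ' j ≠ some s := fun hh => hj2 ⟨mem_univ _, hh⟩
    refine ⟨j, ?_, hμj.trans hs.symm⟩
    rcases lt_or_eq_of_le (hdomall j) with h | h
    · exact h
    · exact absurd ((P j).2 h) (fun hh => hμ'j (hh ▸ hμj))
  choose nxt hbadnxt hmatch using hstep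
  set G : ℕ → {i // Bad i} := fun m =>
    Nat.rec ⟨j₀, hj₀⟩ (fun _ p => ⟨nxt p.1 p.2, hbadnxt p.1 p.2⟩) m with hG
  set f : ℕ → I := fun m => (G m).1 with hfdef
  have hbadf : ∀ m, Bad (f m) := fun m => (G m).2
  have hkey : ∀ m, μ (f (m + 1)) = μ' (f m) := fun m => hmatch (f m) (G m).2
  choose σ hσ using fun m => (by
    cases hh : μ' (f m) with
    | none =>
      have := hbadf m
      rw [hBad] at this
      rw [hh] at this
      exact absurd (hir (f m)) (not_le.mpr this)
    | some s => exact ⟨s, rfl⟩ : ∃ s, μ' (f m) = some s)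
  have hnotinj : ¬ Function.Injective f := by
    intro hinj
    exact (Finite.exists_ne_map_eq_of_infinite f).elim (fun x h =>
      h.elim fun y hy => hy.1 (hinj hy.2))
  have hex : ∃ m, ∃ k, k < m ∧ f k = f m := by
    rw [Function.not_injective_iff] at hnotinj
    obtain ⟨x, y, hxy, hne⟩ := hnotinj
    rcases lt_or_gt_of_ne hne with h | h
    · exact ⟨y, x, h, hxy⟩
    · exact ⟨x, y, h, hxy.symm⟩
  set m₀ := Nat.find hex with hm₀
  obtain ⟨k, hk, hfk⟩ := Nat.find_spec hex
  have hmin : ∀ p p', p < p' → p' < m₀ → f p ≠ f p' := by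
    intro p p' hpp' hp'm hfpp
    exact Nat.find_min hex hp'm ⟨p, hpp', hfpp⟩
  set n := m₀ - k - 1 with hn
  have hm₀k : m₀ = k + n + 1 := by omega
  set a : Fin (n + 1) → I := fun j => f (k + j.val) with ha
  set t : Fin (n + 1) → S := fun j =>
    if j.val = 0 then σ (k + n) else σ (k + j.val - 1) with ht
  have hass : ∀ j, μ (a j) = some (t j) := by
    intro j
    simp only [ha, ht]
    by_cases hj : j.val = 0
    · rw [if_pos hj, hj]
      have h1 : f (k + 0) = f m₀ := by rw [Nat.add_zero, hfk, hm₀]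
      rw [h1, hm₀k, hkey (k + n)]
      exact hσ _
    · rw [if_neg hj]
      have h1 : k + j.val = (k + j.val - 1) + 1 := by omega
      rw [h1]
      rw [hkey (k + j.val - 1)]
      exact hσ _
  have hass' : ∀ j, μ' (a j) = some (t (j + 1)) := by
    intro j
    simp only [ha, ht]
    by_cases hj : j.val = n
    · have hjl : j = Fin.last n := Fin.ext (by rw [hj, Fin.val_last])
      have hv : ((j + 1 : Fin (n + 1))).val = 0 := by
        rw [hjl, Fin.last_add_one, Fin.val_zero]
      rw [hv, if_pos rfl, hj]
      exact hσ _
    · have hjlt : j.val < n := lt_of_le_of_ne (Nat.lt_succ_iff.mp j.isLt) hj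
      have hv : ((j + 1 : Fin (n + 1))).val = j.val + 1 :=
        Fin.val_add_one_of_lt (by rw [Fin.lt_def, Fin.val_last]; exact hjlt)
      rw [hv, if_neg (by omega)]
      have h2 : k + (j.val + 1) - 1 = k + j.val := by omega
      rw [h2]
      exact hσ _
  have hainj : Function.Injective a := by
    intro x y hxy
    by_contra hne
    rw [ha] at hxy
    rcases lt_or_gt_of_ne (fun hh : x.val = y.val => hne (Fin.ext hh)) with h | h
    · exact hmin (k + x.val) (k + y.val) (by omega) (by omega) hxy
    · exact hmin (k + y.val) (k + x.val) (by omega) (by omega) hxy.symm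
  apply hncy
  refine ⟨n, a, t, hainj, hass, ?_⟩
  intro j
  rw [← hass j, ← hass' j]
  exact hbadf (k + j.val)


lemma rt_preserves {P : Prof I S} {q : S → ℕ} {μ₀ ν : Matching I S}
    (h : Relation.ReflTransGen (ImplementStep P q) μ₀ ν)
    (hf : Feasible q μ₀) (hir : IndivRational P μ₀) :
    Feasible q ν ∧ IndivRational P ν ∧ msize μ₀ ≤ msize ν := by
  induction h with
  | refl => exact ⟨hf, hir, le_refl _⟩
  | @tail b c hpre hstep ih =>
    obtain ⟨h1, h2, h3⟩ := ih
    obtain ⟨h4, h5, h6⟩ := step_preserves hstep h1 h2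
    exact ⟨h4, h5, le_trans h3 h6⟩

/-- every EAM mechanism is maximal and Pareto efficient. -/
theorem EAM_maximal_and_efficient
    (q : S → ℕ) (L : List I) (hnd : L.Nodup) (hcomp : ∀ i : I, i ∈ L)
    (ψ : Mechanism I S) (hψ : IsEAMMech q L ψ) :
    MaximalMech q ψ ∧ ∀ P : Prof I S, Efficient P q (ψ P) := by
  have main : ∀ P : Prof I S, Feasible q (ψ P) ∧ IndivRational P (ψ P) ∧
      MaximalMatching P q (ψ P) ∧ Efficient P q (ψ P) := by
    intro P
    obtain ⟨μ₀, hmem, hrt, hnc, hncy⟩ := hψ P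
    obtain ⟨hf₀, hir₀, hmax₀⟩ := xi_maximal P q L hcomp hmem
    have key : Feasible q (ψ P) ∧ IndivRational P (ψ P) ∧ msize μ₀ ≤ msize (ψ P) :=
      rt_preserves hrt hf₀ hir₀
    refine ⟨key.1, key.2.1, ?_, no_chain_cycle_efficient key.1 key.2.1 hnc hncy⟩
    intro μ' hf' hir'
    exact le_trans (hmax₀ μ' hf' hir') key.2.2
  exact ⟨⟨fun P => ⟨(main P).1, (main P).2.1⟩, fun P => (main P).2.2.1⟩,
    fun P => (main P).2.2.2⟩
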